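/- Assume g ∈ C²([0,∞)) satisfies (A1) g(t)>0 and g'(t)>0, (A2) 1/g ∈ L¹(0,∞), and (A3) |d_t^k g(t)| ≤ C_k g(t)(g(t)/G(t))^k for k=1,2, with G(t)=½∫₀ᵗ g(τ)dτ. Fix N > 0 and consider the 2×2 complex matrix A(t,ξ) with entries A₁₁ = −i g'(t)/g(t), A₁₂ = g(t)|ξ|²/2, A₂₁ = 2/g(t), A₂₂ = i g(t)|ξ|², and let E_pd(·,s,ξ) be the fundamental solution, i.e. ∂_t E_pd(t,s,ξ) = i A(t,ξ) E_pd(t,s,ξ), E_pd(s,s,ξ) = I. Then there exists C > 0 (depending on N) such that for all ξ and all 0 ≤ s ≤ t with G(t)|ξ|² ≤ N, every entry satisfies |E_pd^{(kℓ)}(t,s,ξ)| ≤ C g(t)/g(s). -/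

import Mathlib

open Set MeasureTheory

set_option maxHeartbeats 1000000

lemma hdnormSq {X : ℝ → ℂ} {d : ℂ} {x : ℝ} (h : HasDerivAt X d x) :
    HasDerivAt (fun τ => Complex.normSq (X τ))
      (2 * ((X x).re * d.re + (X x).im * d.im)) x := by
  have hre : HasDerivAt (fun τ => (X τ).re) d.re x :=
    Complex.reCLM.hasFDerivAt.comp_hasDerivAt x h
  have him : HasDerivAt (fun τ => (X τ).im) d.im x :=
    Complex.imCLM.hasFDerivAt.comp_hasDerivAt x h
  have h2 := (hre.mul hre).add (him.mul him)
  have heq : (fun τ => Complex.normSq (X τ)) = fun τ => (X τ).re * (X τ).re + (X τ).im * (X τ).im := by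
    funext τ; simp [Complex.normSq_apply]
  rw [heq]
  exact h2.congr_deriv (by ring)

lemma key_lemma
    (g g' : ℝ → ℝ)
    (hg_deriv : ∀ t ∈ Ici (0:ℝ), HasDerivWithinAt g (g' t) (Ici 0) t)
    (hA1 : ∀ t ∈ Ici (0:ℝ), 0 < g t ∧ 0 < g' t)
    (hA2 : IntegrableOn (fun t => 1 / g t) (Ici 0))
    (N k : ℝ) (hk : 0 ≤ k)
    (s t : ℝ) (hs : 0 ≤ s) (hst : s ≤ t)
    (hzone : ((1/2) * ∫ τ in (0:ℝ)..t, g τ) * k ≤ N)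
    (X Y : ℝ → ℂ)
    (hX : ∀ τ ∈ Ici s, HasDerivAt X (((g' τ / g τ : ℝ) : ℂ) * X τ + Complex.I * ((g τ * k / 2 : ℝ) : ℂ) * Y τ) τ)
    (hY : ∀ τ ∈ Ici s, HasDerivAt Y (Complex.I * ((2 / g τ : ℝ) : ℂ) * X τ - ((g τ * k : ℝ) : ℂ) * Y τ) τ)
    (hinit : Complex.normSq (X s) + Complex.normSq (Y s) ≤ 1) :
    Complex.normSq (X t) + Complex.normSq (Y t) ≤
      (Real.exp (N + 2 * ∫ τ in Ici (0:ℝ), 1 / g τ)) ^ 2 * (g t / g s) ^ 2 := by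
  have hg_cont : ContinuousOn g (Ici 0) := fun τ hτ => (hg_deriv τ hτ).continuousWithinAt
  have hIcc0 : Icc s t ⊆ Ici (0:ℝ) := fun u hu => le_trans hs hu.1
  have hgs : 0 < g s := (hA1 s hs).1
  have hgt : 0 < g t := (hA1 t (le_trans hs hst)).1
  set n : ℝ → ℝ := fun τ => Complex.normSq (X τ) + Complex.normSq (Y τ) with hn_def
  set φ : ℝ → ℝ := fun u => g u * k / 2 + 2 / g u with hφ_def
  set Φ : ℝ → ℝ := fun τ => ∫ u in s..τ, φ u with hΦ_def
  set Q : ℝ → ℝ := fun τ => (g s) ^ 2 * ((g τ) ^ 2)⁻¹ with hQ_def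
  set F : ℝ → ℝ := fun τ => Q τ * n τ * Real.exp (-Φ τ) with hF_def
  -- continuity facts
  have hgpos : ∀ u ∈ Icc s t, 0 < g u := fun u hu => (hA1 u (hIcc0 hu)).1
  have hgC : ContinuousOn g (Icc s t) := hg_cont.mono hIcc0
  have hφC : ContinuousOn φ (Icc s t) := by
    apply ContinuousOn.add
    · exact (hgC.mul continuousOn_const).div_const 2
    · exact continuousOn_const.div hgC (fun u hu => (hgpos u hu).ne')
  have hφint : IntegrableOn φ (Icc s t) := hφC.integrableOn_Icc
  have hXC : ContinuousOn X (Ici s) := fun τ hτ => (hX τ hτ).continuousAt.continuousWithinAt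
  have hYC : ContinuousOn Y (Ici s) := fun τ hτ => (hY τ hτ).continuousAt.continuousWithinAt
  have hIccs : Icc s t ⊆ Ici s := fun u hu => hu.1
  have hnC : ContinuousOn n (Icc s t) := by
    apply ContinuousOn.add
    · exact (Complex.continuous_normSq.comp_continuousOn (hXC.mono hIccs))
    · exact (Complex.continuous_normSq.comp_continuousOn (hYC.mono hIccs))
  have hΦC : ContinuousOn Φ (Icc s t) := by
    have := intervalIntegral.continuousOn_primitive_interval
      (f := φ) (a := s) (b := t) (μ := volume) (by rwa [uIcc_of_le hst])
    rwa [uIcc_of_le hst] at this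
  have hFC : ContinuousOn F (Icc s t) := by
    refine (ContinuousOn.mul (ContinuousOn.mul ?_ hnC) ?_)
    · exact continuousOn_const.mul ((hgC.pow 2).inv₀ (fun u hu => pow_ne_zero 2 (hgpos u hu).ne'))
    · exact Real.continuous_exp.comp_continuousOn hΦC.neg
  -- derivative on the interior
  have hF' : ∀ x ∈ Ioo s t, ∃ v, HasDerivAt F v x ∧ v ≤ 0 := by
    intro x hx
    have hxs : s ≤ x := hx.1.le
    have hx0 : 0 < x := lt_of_le_of_lt hs hx.1
    have hxIci : x ∈ Ici s := hxs
    have hgx : 0 < g x := (hA1 x hx0.le).1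
    have hgx' : 0 < g' x := (hA1 x hx0.le).2
    have hgd : HasDerivAt g (g' x) x :=
      (hg_deriv x hx0.le).hasDerivAt (Ici_mem_nhds hx0)
    have hQd : HasDerivAt Q ((g s) ^ 2 * (-(2 * g x ^ 1 * g' x) / ((g x) ^ 2) ^ 2)) x :=
      ((hgd.pow 2).inv (pow_ne_zero 2 hgx.ne')).const_mul _
    set p := X x with hp
    set q := Y x with hq
    have hXd := hX x hxIci
    have hYd := hY x hxIci
    set a := g' x / g x with ha
    set c := 2 / g x with hc
    set d := g x * k with hd
    have hnd := (hdnormSq hXd).add (hdnormSq hYd)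
    set A := 2 * (p.re * (((a:ℝ):ℂ) * p + Complex.I * ((g x * k / 2 : ℝ):ℂ) * q).re
        + p.im * (((a:ℝ):ℂ) * p + Complex.I * ((g x * k / 2 : ℝ):ℂ) * q).im)
      + 2 * (q.re * (Complex.I * ((c:ℝ):ℂ) * p - ((d:ℝ):ℂ) * q).re
        + q.im * (Complex.I * ((c:ℝ):ℂ) * p - ((d:ℝ):ℂ) * q).im) with hA
    -- derivative of Φ
    have hφCopen : ContinuousOn φ (Ioi (0:ℝ)) := by
      have hgo : ContinuousOn g (Ioi (0:ℝ)) := hg_cont.mono Ioi_subset_Ici_self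
      apply ContinuousOn.add
      · exact (hgo.mul continuousOn_const).div_const 2
      · exact continuousOn_const.div hgo (fun u hu => ((hA1 u (mem_Ici.2 (le_of_lt (mem_Ioi.1 hu)))).1).ne')
    have hΦd : HasDerivAt Φ (φ x) x := by
      apply intervalIntegral.integral_hasDerivAt_right
      · exact (by rw [uIcc_of_le hxs]; exact hφC.mono (Icc_subset_Icc le_rfl hx.2.le) :
          ContinuousOn φ (uIcc s x)).intervalIntegrable
      · exact hφCopen.stronglyMeasurableAtFilter isOpen_Ioi x hx0
      · exact hφCopen.continuousAt (isOpen_Ioi.mem_nhds hx0)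
    have hexp : HasDerivAt (fun τ => Real.exp (-Φ τ)) (Real.exp (-Φ x) * -(φ x)) x := hΦd.neg.exp
    have hFd := ((hQd.mul hnd).mul hexp)
    refine ⟨_, hFd, ?_⟩
    have hQx : 0 < Q x := by
      have : (0:ℝ) < (g x ^ 2)⁻¹ := by positivity
      simp only [hQ_def]; positivity
    have hepos : 0 < Real.exp (-Φ x) := Real.exp_pos _
    -- bracket inequality : A ≤ (2 a + φ x) * n x
    have hbra : A ≤ (2 * a + φ x) * n x := by
      set b := g x * k / 2 with hb
      have hnx : n x = (p.re ^ 2 + p.im ^ 2) + (q.re ^ 2 + q.im ^ 2) := by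
        simp [hn_def, Complex.normSq_apply]; ring
      have hAval : A = (2 * a * (p.re ^ 2 + p.im ^ 2) + 2 * b * (p.im * q.re - p.re * q.im))
          + (-(2 * c) * (p.im * q.re - p.re * q.im) - 2 * d * (q.re ^ 2 + q.im ^ 2)) := by
        simp [hA, Complex.add_re, Complex.add_im, Complex.sub_re, Complex.sub_im,
          Complex.mul_re, Complex.mul_im, Complex.I_re, Complex.I_im,
          Complex.ofReal_re, Complex.ofReal_im]
        ring
      have hφx : φ x = b + c := by simp [hφ_def, hb, hc]
      have hbpos : 0 ≤ b := by positivity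
      have hcpos : 0 ≤ c := by positivity
      have hdpos : 0 ≤ d := by positivity
      have hapos : 0 ≤ a := by positivity
      set S := p.re ^ 2 + p.im ^ 2 with hS
      set T := q.re ^ 2 + q.im ^ 2 with hT
      set w := p.im * q.re - p.re * q.im with hw
      have hSpos : 0 ≤ S := by positivity
      have hTpos : 0 ≤ T := by positivity
      have hw1 : 2 * w ≤ S + T := by nlinarith [sq_nonneg (p.im - q.re), sq_nonneg (p.re + q.im)]
      have hw2 : -(2 * w) ≤ S + T := by nlinarith [sq_nonneg (p.im + q.re), sq_nonneg (p.re - q.im)]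
      have e1 := mul_le_mul_of_nonneg_left hw1 hbpos
      have e2 := mul_le_mul_of_nonneg_left hw2 hcpos
      have e3 := mul_nonneg hapos hTpos
      have e4 := mul_nonneg hdpos hTpos
      rw [hAval, hφx, hnx]
      nlinarith [e1, e2, e3, e4]
    -- conclude value ≤ 0
    have hQ'eq : (g s) ^ 2 * (-(2 * g x ^ 1 * g' x) / ((g x) ^ 2) ^ 2) = -(2 * a) * Q x := by
      rw [hQ_def, ha]
      field_simp
    have key : ((g s) ^ 2 * (-(2 * g x ^ 1 * g' x) / ((g x) ^ 2) ^ 2) * n x + Q x * A) *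
          Real.exp (-Φ x) + Q x * n x * (Real.exp (-Φ x) * -(φ x))
        = Real.exp (-Φ x) * (Q x * A - Q x * ((2 * a + φ x) * n x)) := by
      rw [hQ'eq]; ring
    refine (le_of_eq key).trans ?_
    exact mul_nonpos_of_nonneg_of_nonpos hepos.le
      (sub_nonpos.2 (mul_le_mul_of_nonneg_left hbra hQx.le))
  -- antitone
  have hanti : AntitoneOn F (Icc s t) := by
    apply antitoneOn_of_deriv_nonpos (convex_Icc s t) hFC
    · intro x hx
      rw [interior_Icc] at hx
      exact ((hF' x hx).choose_spec.1.differentiableAt).differentiableWithinAt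
    · intro x hx
      rw [interior_Icc] at hx
      obtain ⟨v, hv, hv0⟩ := hF' x hx
      rw [hv.deriv]; exact hv0
  have hFt : F t ≤ F s := hanti ⟨le_rfl, hst⟩ ⟨hst, le_rfl⟩ hst
  -- F s = n s ≤ 1
  have hFs : F s ≤ 1 := by
    have h1 : Q s = 1 := by
      simp [hQ_def]
      exact mul_inv_cancel₀ (pow_ne_zero 2 hgs.ne')
    have h2 : Φ s = 0 := by simp [hΦ_def]
    have : F s = n s := by rw [hF_def]; simp [h1, h2]
    rw [this]; exact hinit
  -- bound on Φ t
  set K := ∫ τ in Ici (0:ℝ), 1 / g τ with hK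
  have hgnonneg : ∀ u, u ∈ Ici (0:ℝ) → 0 ≤ g u := fun u hu => ((hA1 u hu).1).le
  have hKpos : 0 ≤ K := setIntegral_nonneg measurableSet_Ici
    (fun u hu => div_nonneg zero_le_one ((hA1 u hu).1).le)
  have hNpos : 0 ≤ N := by
    refine le_trans ?_ hzone
    have h0 : 0 ≤ ∫ τ in (0:ℝ)..t, g τ := intervalIntegral.integral_nonneg (le_trans hs hst)
      (fun u hu => hgnonneg u hu.1)
    exact mul_nonneg (mul_nonneg (by norm_num) h0) hk
  have hΦt : Φ t ≤ N + 2 * K := by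
    have hint1 : IntervalIntegrable (fun u => g u * k / 2) volume s t :=
      ((hgC.mul continuousOn_const).div_const 2).intervalIntegrable_of_Icc hst
    have hint2 : IntervalIntegrable (fun u => 2 / g u) volume s t :=
      (continuousOn_const.div hgC (fun u hu => (hgpos u hu).ne')).intervalIntegrable_of_Icc hst
    have hsplit : Φ t = (∫ u in s..t, g u * k / 2) + ∫ u in s..t, 2 / g u := by
      rw [hΦ_def]; exact intervalIntegral.integral_add hint1 hint2
    have hb1 : (∫ u in s..t, g u * k / 2) ≤ N := by
      have hg0s : IntervalIntegrable g volume 0 s :=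
        (hg_cont.mono (fun u hu => hu.1 : Icc (0:ℝ) s ⊆ Ici 0)).intervalIntegrable_of_Icc hs
      have hgst : IntervalIntegrable g volume s t := hgC.intervalIntegrable_of_Icc hst
      have hadd := intervalIntegral.integral_add_adjacent_intervals hg0s hgst
      have h0s : 0 ≤ ∫ u in (0:ℝ)..s, g u :=
        intervalIntegral.integral_nonneg hs (fun u hu => hgnonneg u hu.1)
      have hstle : (∫ u in s..t, g u) ≤ ∫ u in (0:ℝ)..t, g u := by linarith
      have : (∫ u in s..t, g u * k / 2) = (∫ u in s..t, g u) * (k / 2) := by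
        rw [← intervalIntegral.integral_mul_const]
        congr 1; funext u; ring
      rw [this]
      calc (∫ u in s..t, g u) * (k / 2) ≤ (∫ u in (0:ℝ)..t, g u) * (k / 2) := by
            apply mul_le_mul_of_nonneg_right hstle; positivity
        _ = ((1/2) * ∫ τ in (0:ℝ)..t, g τ) * k := by ring
        _ ≤ N := hzone
    have hb2 : (∫ u in s..t, 2 / g u) ≤ 2 * K := by
      have : (∫ u in s..t, 2 / g u) = 2 * ∫ u in s..t, 1 / g u := by
        rw [← intervalIntegral.integral_const_mul]
        congr 1; funext u; ring
      rw [this]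
      have hmono : (∫ u in s..t, 1 / g u) ≤ K := by
        rw [intervalIntegral.integral_of_le hst]
        apply setIntegral_mono_set hA2
        · filter_upwards [ae_restrict_mem measurableSet_Ici] with u hu
          exact div_nonneg zero_le_one ((hA1 u hu).1).le
        · exact Filter.Eventually.of_forall (fun u hu => le_trans hs hu.1.le)
      linarith
    linarith [hsplit ▸ add_le_add hb1 hb2]
  -- conclude
  have hQt : Q t * n t * Real.exp (-Φ t) ≤ 1 := le_trans hFt hFs
  have hnt : 0 ≤ n t := add_nonneg (Complex.normSq_nonneg _) (Complex.normSq_nonneg _)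
  have hexpΦ : Real.exp (Φ t) ≤ Real.exp (N + 2 * K) := Real.exp_le_exp.2 hΦt
  have h1 : n t ≤ Real.exp (Φ t) * (g t / g s) ^ 2 := by
    have e1 : 0 < Real.exp (-Φ t) := Real.exp_pos _
    have : n t * Real.exp (-Φ t) ≤ (g t / g s)^2 := by
      have hQinv : Q t = ((g t / g s) ^ 2)⁻¹ := by
        rw [hQ_def]
        field_simp
      rw [hQinv] at hQt
      have h2 : 0 < ((g t / g s) ^ 2) := by positivity
      calc n t * Real.exp (-Φ t) = ((g t / g s) ^ 2) * (((g t / g s) ^ 2)⁻¹ * n t * Real.exp (-Φ t)) := by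
            field_simp
        _ ≤ ((g t / g s) ^ 2) * 1 := mul_le_mul_of_nonneg_left hQt h2.le
        _ = (g t / g s) ^ 2 := mul_one _
    calc n t = n t * Real.exp (-Φ t) * Real.exp (Φ t) := by
          rw [mul_assoc, ← Real.exp_add]; simp
      _ ≤ (g t / g s)^2 * Real.exp (Φ t) := mul_le_mul_of_nonneg_right this (Real.exp_pos _).le
      _ = Real.exp (Φ t) * (g t / g s) ^ 2 := by ring
  have hexple : Real.exp (N + 2 * K) ≤ (Real.exp (N + 2 * K)) ^ 2 := by
    have h1 : 1 ≤ Real.exp (N + 2 * K) := Real.one_le_exp (by linarith)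
    nlinarith
  calc n t ≤ Real.exp (Φ t) * (g t / g s) ^ 2 := h1
    _ ≤ Real.exp (N + 2 * K) * (g t / g s) ^ 2 := by
        apply mul_le_mul_of_nonneg_right hexpΦ; positivity
    _ ≤ (Real.exp (N + 2 * K)) ^ 2 * (g t / g s) ^ 2 := by
        apply mul_le_mul_of_nonneg_right hexple; positivity

theorem stmt_4
    (n : ℕ)
    (g g' g'' : ℝ → ℝ)
    (hg_deriv : ∀ t ∈ Ici (0:ℝ), HasDerivWithinAt g (g' t) (Ici 0) t)
    (hg_deriv' : ∀ t ∈ Ici (0:ℝ), HasDerivWithinAt g' (g'' t) (Ici 0) t)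
    (hg_cont : ContinuousOn g'' (Ici 0))
    (hA1 : ∀ t ∈ Ici (0:ℝ), 0 < g t ∧ 0 < g' t)
    (hA2 : IntegrableOn (fun t => 1 / g t) (Ici 0))
    (hA3 : ∃ C₁ > (0:ℝ), ∃ C₂ > (0:ℝ), ∀ t ∈ Ici (0:ℝ),
      |g' t| * ((1/2) * ∫ τ in (0:ℝ)..t, g τ) ≤ C₁ * g t * g t ∧
      |g'' t| * ((1/2) * ∫ τ in (0:ℝ)..t, g τ) ^ 2 ≤ C₂ * g t * g t ^ 2)
    (N : ℝ) (hN : 0 < N) :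
    ∃ C > (0:ℝ),
      ∀ (ξ : EuclideanSpace ℝ (Fin n)),
      ∀ s t : ℝ, 0 ≤ s → s ≤ t →
        ((1/2) * ∫ τ in (0:ℝ)..t, g τ) * ‖ξ‖ ^ 2 ≤ N →
      ∀ E11 E12 E21 E22 : ℝ → ℂ,
        E11 s = 1 → E12 s = 0 → E21 s = 0 → E22 s = 1 →
        (∀ τ ∈ Ici s,
          HasDerivAt E11 (Complex.I * ((-Complex.I * ((g' τ / g τ : ℝ) : ℂ)) * E11 τ + ((g τ * ‖ξ‖ ^ 2 / 2 : ℝ) : ℂ) * E21 τ)) τ ∧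
          HasDerivAt E21 (Complex.I * (((2 / g τ : ℝ) : ℂ) * E11 τ + (Complex.I * ((g τ * ‖ξ‖ ^ 2 : ℝ) : ℂ)) * E21 τ)) τ ∧
          HasDerivAt E12 (Complex.I * ((-Complex.I * ((g' τ / g τ : ℝ) : ℂ)) * E12 τ + ((g τ * ‖ξ‖ ^ 2 / 2 : ℝ) : ℂ) * E22 τ)) τ ∧
          HasDerivAt E22 (Complex.I * (((2 / g τ : ℝ) : ℂ) * E12 τ + (Complex.I * ((g τ * ‖ξ‖ ^ 2 : ℝ) : ℂ)) * E22 τ)) τ) →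
        ‖E11 t‖ ≤ C * (g t / g s) ∧ ‖E12 t‖ ≤ C * (g t / g s) ∧
        ‖E21 t‖ ≤ C * (g t / g s) ∧ ‖E22 t‖ ≤ C * (g t / g s) := by
  refine ⟨Real.exp (N + 2 * ∫ τ in Ici (0:ℝ), 1 / g τ), Real.exp_pos _, ?_⟩
  set C := Real.exp (N + 2 * ∫ τ in Ici (0:ℝ), 1 / g τ) with hC_def
  intro ξ s t hs hst hzone E11 E12 E21 E22 h11 h12 h21 h22 hODE
  set k := ‖ξ‖ ^ 2 with hk_def
  have hk : 0 ≤ k := by positivity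
  have hgs : 0 < g s := (hA1 s hs).1
  have hgt : 0 < g t := (hA1 t (le_trans hs hst)).1
  have hCr : 0 ≤ C * (g t / g s) := by positivity
  have hnorm : ∀ z : ℂ, Complex.normSq z ≤ C ^ 2 * (g t / g s) ^ 2 → ‖z‖ ≤ C * (g t / g s) := by
    intro z hz
    have h1 : ‖z‖ = Real.sqrt (Complex.normSq z) := by
      rw [Complex.norm_def]
    rw [h1]
    calc Real.sqrt (Complex.normSq z) ≤ Real.sqrt ((C * (g t / g s)) ^ 2) := by
          apply Real.sqrt_le_sqrt; rw [mul_pow]; exact hz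
      _ = C * (g t / g s) := Real.sqrt_sq hCr
  have hcol : ∀ X Y : ℝ → ℂ,
      (∀ τ ∈ Ici s,
        HasDerivAt X (Complex.I * ((-Complex.I * ((g' τ / g τ : ℝ) : ℂ)) * X τ + ((g τ * k / 2 : ℝ) : ℂ) * Y τ)) τ ∧
        HasDerivAt Y (Complex.I * (((2 / g τ : ℝ) : ℂ) * X τ + (Complex.I * ((g τ * k : ℝ) : ℂ)) * Y τ)) τ) →
      Complex.normSq (X s) + Complex.normSq (Y s) ≤ 1 →
      Complex.normSq (X t) + Complex.normSq (Y t) ≤ C ^ 2 * (g t / g s) ^ 2 := by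
    intro X Y hd hinit
    apply key_lemma g g' hg_deriv hA1 hA2 N k hk s t hs hst hzone X Y ?_ ?_ hinit
    · intro τ hτ
      have h := (hd τ hτ).1
      convert h using 1
      linear_combination (((g' τ / g τ : ℝ) : ℂ) * X τ) * Complex.I_sq
    · intro τ hτ
      have h := (hd τ hτ).2
      convert h using 1
      linear_combination (-(((g τ * k : ℝ) : ℂ) * Y τ)) * Complex.I_sq
  have hc1 := hcol E11 E21 (fun τ hτ => ⟨(hODE τ hτ).1, (hODE τ hτ).2.1⟩)
    (by rw [h11, h21]; simp)
  have hc2 := hcol E12 E22 (fun τ hτ => ⟨(hODE τ hτ).2.2.1, (hODE τ hτ).2.2.2⟩)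
    (by rw [h12, h22]; simp)
  have hnsq : ∀ z w : ℂ, Complex.normSq z + Complex.normSq w ≤ C ^ 2 * (g t / g s) ^ 2 →
      Complex.normSq z ≤ C ^ 2 * (g t / g s) ^ 2 ∧ Complex.normSq w ≤ C ^ 2 * (g t / g s) ^ 2 := by
    intro z w h
    constructor <;> nlinarith [Complex.normSq_nonneg z, Complex.normSq_nonneg w]
  exact ⟨hnorm _ (hnsq _ _ hc1).1, hnorm _ (hnsq _ _ hc2).1,
    hnorm _ (hnsq _ _ hc1).2, hnorm _ (hnsq _ _ hc2).2⟩
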